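/- Let ψ be the binary morphism with ψ(0) = 0110101100101100101001 and ψ(1) = 1001010011010011010110. Then no nonempty prefix of the infinite word ψ(t) is a square, where t is the Thue–Morse word. -/

import Mathlib

/-- A square is a word of the form XX with X nonempty. -/
def IsSquare' {α : Type*} (w : List α) : Prop :=
  ∃ X : List α, X ≠ [] ∧ w = X ++ X

/-- The Thue–Morse word: the n-th letter (0-indexed) is the parity of the number
of 1s in the binary expansion of n. -/
def thueMorse (n : ℕ) : Fin 2 := (Fin.ofNat 2 (Nat.digits 2 n).sum : Fin 2)

/-- The finite prefix of length n of an infinite word. -/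
def wordPrefix {α : Type*} (s : ℕ → α) (n : ℕ) : List α := (List.range n).map s

/-- Apply the binary morphism determined by letter images `h` to a word. -/
def applyMorphism {α : Type*} (h : α → List α) (w : List α) : List α := w.flatMap h

/-- The binary morphism ψ with ψ(0) = 0110101100101100101001 and
ψ(1) = 1001010011010011010110. -/
def psi : Fin 2 → List (Fin 2) := fun a =>
  if a = 0 then [0,1,1,0,1,0,1,1,0,0,1,0,1,1,0,0,1,0,1,0,0,1]
  else [1,0,0,1,0,1,0,0,1,1,0,1,0,0,1,1,0,1,0,1,1,0]

/-! ### Auxiliary machinery -/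

/-- The image ψ(0), viewed as a function on offsets. -/
def cc (s : ℕ) : Fin 2 := (psi 0).getD s 0

/-- The infinite word ψ(t), letter by letter. -/
def W (n : ℕ) : Fin 2 := thueMorse (n / 22) + cc (n % 22)

lemma tm_rec (n : ℕ) (hn : 0 < n) : thueMorse n = Fin.ofNat 2 (n % 2) + thueMorse (n / 2) := by
  unfold thueMorse
  rw [Nat.digits_def' (by norm_num : 1 < 2) hn, List.sum_cons]
  ext
  simp only [Fin.val_add, Fin.val_ofNat]
  omega

lemma tm_zero : thueMorse 0 = 0 := by simp [thueMorse]

lemma tm_even (n : ℕ) : thueMorse (2 * n) = thueMorse n := by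
  rcases Nat.eq_zero_or_pos n with rfl | hn
  · simp
  · rw [tm_rec (2 * n) (by omega)]
    simp [Nat.mul_div_cancel_left, Nat.mul_mod_right]

lemma tm_odd (n : ℕ) : thueMorse (2 * n + 1) = 1 + thueMorse n := by
  rw [tm_rec (2 * n + 1) (by omega)]
  have h1 : (2 * n + 1) % 2 = 1 := by omega
  have h2 : (2 * n + 1) / 2 = n := by omega
  rw [h1, h2]; norm_num; rfl

lemma tm_one : thueMorse 1 = 1 := by
  have h := tm_odd 0; rw [tm_zero] at h; norm_num at h; exact h

lemma fin_ne_one_add (x : Fin 2) : x ≠ 1 + x := by revert x; decide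

/-- No nonempty prefix of the Thue–Morse word is a square. -/
lemma tm_ns : ∀ m, 0 < m → ∃ i, i < m ∧ thueMorse i ≠ thueMorse (i + m) := by
  intro m
  induction m using Nat.strong_induction_on with
  | _ m IH =>
  intro hm
  by_contra hcon
  push_neg at hcon
  rcases Nat.even_or_odd m with ⟨r, hr⟩ | ⟨r, hr⟩
  · have hr0 : 0 < r := by omega
    obtain ⟨i, hi, hne⟩ := IH r (by omega) hr0
    apply hne
    have h := hcon (2 * i) (by omega)
    rw [show 2 * i + m = 2 * (i + r) by omega, tm_even, tm_even] at h
    exact h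
  · -- m = 2r + 1
    have h1 : ∀ j ≤ r, thueMorse j = 1 + thueMorse (j + r) := by
      intro j hj
      have h := hcon (2 * j) (by omega)
      rw [show 2 * j + m = 2 * (j + r) + 1 by omega, tm_even, tm_odd] at h
      exact h
    have h2 : ∀ j < r, 1 + thueMorse j = thueMorse (j + r + 1) := by
      intro j hj
      have h := hcon (2 * j + 1) (by omega)
      rw [show 2 * j + 1 + m = 2 * (j + r + 1) by omega, tm_odd, tm_even] at h
      exact h
    have h3 : ∀ j < r, thueMorse (j + r) = thueMorse (j + r + 1) := by
      intro j hj
      have a1 := h1 j (le_of_lt hj)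
      have a2 := h2 j hj
      have : thueMorse (j + r) = 1 + thueMorse j := by
        rw [a1]; fin_omega
      rw [this, a2]
    rcases Nat.lt_or_ge r 2 with hr2 | hr2
    · interval_cases r
      · exact fin_ne_one_add _ (h1 0 le_rfl)
      · have := h1 1 le_rfl
        have e2 : thueMorse 2 = 1 := by
          have h := tm_even 1; norm_num at h; rw [h, tm_one]
        rw [tm_one, e2] at this
        exact absurd this (by decide)
    · have pair : ∀ n, thueMorse (2 * n) ≠ thueMorse (2 * n + 1) := by
        intro n
        rw [tm_even, tm_odd]
        exact fin_ne_one_add _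
      rcases Nat.even_or_odd r with ⟨s, hs⟩ | ⟨s, hs⟩
      · have := h3 0 (by omega)
        simp only [Nat.zero_add] at this
        exact pair s (by rw [show 2*s = r by omega]; exact this)
      · have := h3 1 (by omega)
        exact pair (s + 1) (by rw [show 2*(s+1) = 1 + r by omega]; exact this)

lemma block : ∀ a : Fin 2, (List.range 22).map (fun s => a + cc s) = psi a := by decide

lemma cc_zero : cc 0 = 0 := by decide

lemma caseB : ∀ m < 22, 0 < m →
    ¬ (∀ i < m, cc i = if i + m < 22 then cc (i + m) else 1 + cc (i + m - 22)) := by decide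

lemma caseC : ∀ d < 22, 0 < d → ∀ a b : Fin 2,
    ¬ (∀ i < 22, (if i + d < 22 then a + cc (i + d) else b + cc (i + d - 22)) = cc i) := by decide

lemma morph_eq (k : ℕ) : applyMorphism psi (wordPrefix thueMorse k) = wordPrefix W (22 * k) := by
  induction k with
  | zero => rfl
  | succ k ih =>
    have h1 : wordPrefix thueMorse (k + 1) = wordPrefix thueMorse k ++ [thueMorse k] := by
      simp [wordPrefix, List.range_succ]
    have h2 : wordPrefix W (22 * (k + 1)) =
        wordPrefix W (22 * k) ++ (List.range 22).map (fun s => W (22 * k + s)) := by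
      rw [show 22 * (k + 1) = 22 * k + 22 by ring]
      simp [wordPrefix, List.range_add, List.map_map]
    rw [h1, h2]
    unfold applyMorphism
    rw [List.flatMap_append]
    unfold applyMorphism at ih
    rw [ih]
    congr 1
    have h3 : (List.range 22).map (fun s => W (22 * k + s)) =
        (List.range 22).map (fun s => thueMorse k + cc s) := by
      apply List.map_congr_left
      intro s hs
      rw [List.mem_range] at hs
      unfold W
      have e1 : (22 * k + s) / 22 = k := by omega
      have e2 : (22 * k + s) % 22 = s := by omega
      rw [e1, e2]
    rw [h3, block]
    simp

lemma W_small {i : ℕ} (hi : i < 22) : W i = cc i := by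
  unfold W
  rw [Nat.div_eq_of_lt hi, Nat.mod_eq_of_lt hi, tm_zero, zero_add]

/-- No nonempty prefix of ψ(t) is a square: every nonempty prefix of the image of the
infinite Thue–Morse word is a prefix of the image of some finite prefix of t,
and vice versa. -/
theorem no_prefix_of_psi_image_is_square (k : ℕ) (p : List (Fin 2)) (hp : p ≠ [])
    (hpre : p <+: applyMorphism psi (wordPrefix thueMorse k)) : ¬ IsSquare' p := by
  rintro ⟨X, hX, rfl⟩
  rw [morph_eq] at hpre
  set m := X.length with hm
  have hm0 : 0 < m := List.length_pos_iff.mpr hX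
  have hlen : (X ++ X).length = m + m := by simp [hm]
  have hW : ∀ i (hi : i < 22 * k),
      (wordPrefix W (22 * k))[i]'(by simpa [wordPrefix] using hi) = W i := by
    intro i hi
    simp [wordPrefix]
  have hle : m + m ≤ 22 * k := by
    have := hpre.length_le
    simp [wordPrefix] at this
    omega
  have key : ∀ i (hi : i < m + m), W i = (X ++ X)[i]'(by simp; omega) := by
    intro i hi
    rw [hpre.getElem (by omega)]
    exact (hW i (by omega)).symm
  have H : ∀ i < m, W i = W (i + m) := by
    intro i hi
    have e1 : W i = X[i]'hi := by
      rw [key i (by omega)]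
      exact List.getElem_append_left hi
    have e2 : W (i + m) = X[i]'hi := by
      rw [key (i + m) (by omega)]
      rw [List.getElem_append_right (by omega)]
      congr 1
      omega
    rw [e1, e2]
  rcases Nat.lt_or_ge m 22 with hsm | hbg
  · -- short squares: finite check inside ψ(0)ψ(1)
    apply caseB m hsm hm0
    intro i hi
    have h := H i hi
    rw [W_small (by omega)] at h
    unfold W at h
    split
    · next hlt =>
      rw [Nat.div_eq_of_lt hlt, Nat.mod_eq_of_lt hlt, tm_zero, zero_add] at h
      exact h
    · next hge =>
      have e1 : (i + m) / 22 = 1 := by omega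
      have e2 : (i + m) % 22 = i + m - 22 := by omega
      rw [e1, e2, tm_one] at h
      exact h
  · set d := m % 22 with hd
    set q := m / 22 with hq
    rcases Nat.eq_zero_or_pos d with hd0 | hd0
    · -- aligned case: reduces to the Thue–Morse word itself
      have hq0 : 0 < q := by omega
      obtain ⟨j, hj, hne⟩ := tm_ns q hq0
      apply hne
      have h := H (22 * j) (by omega)
      unfold W at h
      have e1 : (22 * j) / 22 = j := by omega
      have e2 : (22 * j) % 22 = 0 := by omega
      have e3 : (22 * j + m) / 22 = j + q := by omega
      have e4 : (22 * j + m) % 22 = 0 := by omega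
      rw [e1, e2, e3, e4, cc_zero, add_zero, add_zero] at h
      exact h
    · -- misaligned case: ψ(0) occurs at a nonzero offset in some ψ(a)ψ(b)
      apply caseC d (by omega) hd0 (thueMorse q) (thueMorse (q + 1))
      intro i hi
      have h := H i (by omega)
      rw [W_small hi] at h
      unfold W at h
      split
      · next hlt =>
        have e1 : (i + m) / 22 = q := by omega
        have e2 : (i + m) % 22 = i + d := by omega
        rw [e1, e2] at h
        exact h.symm
      · next hge =>
        have e1 : (i + m) / 22 = q + 1 := by omega
        have e2 : (i + m) % 22 = i + d - 22 := by omega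
        rw [e1, e2] at h
        exact h.symm
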